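/- Fix φ_t ∈ ℝ and η ≠ 0, and let τ = φ_t + δ with δ strictly between 0 and η. Consider the one-dimensional questioner parameterization θ ↦ τ(θ) = θ (identity), J_t(θ) = -|σ(φ_t - θ) - 1/2|, J_{t+1}(θ) = -|σ(φ_t + η - θ) - 1/2|, and let g = J_t'(τ) ≠ 0. Then there exist c > 0 and α₀ > 0 such that for all 0 < α < α₀, J_{t+1}(τ + α g) - J_{t+1}(τ) ≤ -c α. -/

import Mathlib

noncomputable def sigma (z : ℝ) : ℝ := 1 / (1 + Real.exp (-z))

noncomputable def sigd (x : ℝ) : ℝ := Real.exp (-x) / (1 + Real.exp (-x))^2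

lemma one_add_exp_pos (x : ℝ) : 0 < 1 + Real.exp (-x) :=
  by positivity

lemma sigd_pos (x : ℝ) : 0 < sigd x := by
  have := one_add_exp_pos x
  unfold sigd
  positivity

lemma sigma_hasDeriv (x : ℝ) : HasDerivAt sigma (sigd x) x := by
  have h1 : HasDerivAt (fun z : ℝ => 1 + Real.exp (-z)) (-Real.exp (-x)) x := by
    have h : HasDerivAt (fun z : ℝ => Real.exp (-z)) (Real.exp (-x) * (-1)) x :=
      (Real.hasDerivAt_exp (-x)).comp x ((hasDerivAt_id x).neg)
    simpa using h.const_add 1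
  have h2 : (1 + Real.exp (-x)) ≠ 0 := (one_add_exp_pos x).ne'
  have h3 := h1.inv h2
  unfold sigma sigd
  simpa [one_div, neg_neg, Pi.inv_def] using h3

lemma sigma_continuous : Continuous sigma := by
  unfold sigma
  exact continuous_const.div
    (continuous_const.add (Real.continuous_exp.comp continuous_neg))
    (fun x => (one_add_exp_pos x).ne')

lemma sigma_sub_half_pos {x : ℝ} (hx : 0 < x) : 0 < sigma x - 1/2 := by
  have h2 := one_add_exp_pos x
  have he : Real.exp (-x) < 1 := by
    rw [Real.exp_lt_one_iff]; linarith
  have heq : sigma x - 1/2 = (1 - Real.exp (-x)) / (2*(1+Real.exp (-x))) := by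
    unfold sigma; field_simp; ring
  rw [heq]
  apply div_pos <;> linarith

lemma sigma_sub_half_neg {x : ℝ} (hx : x < 0) : sigma x - 1/2 < 0 := by
  have h2 := one_add_exp_pos x
  have he : 1 < Real.exp (-x) := by
    rw [Real.one_lt_exp_iff]; linarith
  have heq : sigma x - 1/2 = (1 - Real.exp (-x)) / (2*(1+Real.exp (-x))) := by
    unfold sigma; field_simp; ring
  rw [heq]
  apply div_neg_of_neg_of_pos <;> linarith

lemma inner_hasDeriv (a τ : ℝ) :
    HasDerivAt (fun θ : ℝ => sigma (a - θ) - 1/2) (-(sigd (a - τ))) τ := by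
  have h0 : HasDerivAt (fun θ : ℝ => a - θ) (-1) τ := (hasDerivAt_id τ).const_sub a
  have h1 := ((sigma_hasDeriv (a - τ)).comp τ h0).sub_const (1/2 : ℝ)
  simpa [mul_comm] using h1

lemma hasDeriv_negabs_pos (a τ : ℝ) (h : 0 < a - τ) :
    HasDerivAt (fun θ : ℝ => -|sigma (a - θ) - 1/2|) (sigd (a - τ)) τ := by
  have hinner : HasDerivAt (fun θ : ℝ => -(sigma (a - θ) - 1/2)) (sigd (a - τ)) τ := by
    simpa [Pi.neg_def] using (inner_hasDeriv a τ).neg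
  apply hinner.congr_of_eventuallyEq
  have hcont : ContinuousAt (fun θ : ℝ => sigma (a - θ) - 1/2) τ :=
    ((sigma_continuous.comp (continuous_const.sub continuous_id)).sub continuous_const).continuousAt
  have hτ : 0 < sigma (a - τ) - 1/2 := sigma_sub_half_pos h
  have hev : ∀ᶠ θ in nhds τ, 0 < sigma (a - θ) - 1/2 :=
    hcont.eventually (eventually_gt_nhds hτ)
  filter_upwards [hev] with θ hθ
  rw [abs_of_pos hθ]

lemma hasDeriv_negabs_neg (a τ : ℝ) (h : a - τ < 0) :
    HasDerivAt (fun θ : ℝ => -|sigma (a - θ) - 1/2|) (-(sigd (a - τ))) τ := by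
  have hinner := inner_hasDeriv a τ
  apply hinner.congr_of_eventuallyEq
  have hcont : ContinuousAt (fun θ : ℝ => sigma (a - θ) - 1/2) τ :=
    ((sigma_continuous.comp (continuous_const.sub continuous_id)).sub continuous_const).continuousAt
  have hτ : sigma (a - τ) - 1/2 < 0 := sigma_sub_half_neg h
  have hev : ∀ᶠ θ in nhds τ, sigma (a - θ) - 1/2 < 0 :=
    hcont.eventually (eventually_lt_nhds hτ)
  filter_upwards [hev] with θ hθ
  rw [abs_of_neg hθ]
  ring

lemma key (F : ℝ → ℝ) (τ g d : ℝ) (hF : HasDerivAt F d τ) (hL : g * d < 0) :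
    ∃ c > 0, ∃ α₀ > 0, ∀ α : ℝ, 0 < α → α < α₀ →
      F (τ + α * g) - F τ ≤ -c * α := by
  set L := g * d with hLdef
  have hh : HasDerivAt (fun α : ℝ => F (τ + α * g)) L 0 := by
    have h0 : HasDerivAt (fun α : ℝ => τ + α * g) g 0 := by
      simpa using ((hasDerivAt_id (0:ℝ)).mul_const g).const_add τ
    have h1 : HasDerivAt F d (τ + 0 * g) := by simpa using hF
    have := h1.comp 0 h0
    simpa [hLdef, mul_comm, Function.comp_def] using this
  have hslope := hasDerivAt_iff_tendsto_slope.mp hh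
  have hev : ∀ᶠ α in nhdsWithin (0:ℝ) {(0:ℝ)}ᶜ,
      slope (fun α : ℝ => F (τ + α * g)) 0 α < L/2 :=
    hslope.eventually (eventually_lt_nhds (by linarith))
  obtain ⟨ε, hε, hsub⟩ := Metric.mem_nhdsWithin_iff.mp hev
  refine ⟨-L/2, by linarith, ε, hε, fun α hα hαε => ?_⟩
  have hmem : α ∈ Metric.ball (0:ℝ) ε := by
    simp [Real.dist_eq, abs_of_pos hα, hαε]
  have hne : α ∈ ({(0:ℝ)}ᶜ : Set ℝ) := by simp [hα.ne']
  have hs : slope (fun α : ℝ => F (τ + α * g)) 0 α < L/2 := hsub ⟨hmem, hne⟩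
  rw [slope_def_field] at hs
  have h0 : F (τ + (0:ℝ) * g) = F τ := by norm_num
  have hdiv : (F (τ + α * g) - F τ) / α < L/2 := by
    simpa [h0] using hs
  have := (div_lt_iff₀ hα).mp hdiv
  nlinarith

theorem stmt_19 (φt η δ : ℝ) (hη : η ≠ 0)
    (hδ : (0 < η → 0 < δ ∧ δ < η) ∧ (η < 0 → η < δ ∧ δ < 0)) :
    deriv (fun θ : ℝ => -|sigma (φt - θ) - 1/2|) (φt + δ) ≠ 0 ∧
    ∃ c > 0, ∃ α₀ > 0, ∀ α : ℝ, 0 < α → α < α₀ →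
      (fun θ : ℝ => -|sigma (φt + η - θ) - 1/2|)
          ((φt + δ) + α * deriv (fun θ : ℝ => -|sigma (φt - θ) - 1/2|) (φt + δ)) -
        (fun θ : ℝ => -|sigma (φt + η - θ) - 1/2|) (φt + δ) ≤ -c * α := by
  rcases lt_or_gt_of_ne hη with hneg | hpos
  · -- η < 0 : η < δ < 0
    obtain ⟨h1, h2⟩ := hδ.2 hneg
    have hJt := hasDeriv_negabs_pos φt (φt + δ) (by linarith)
    have hJ1 := hasDeriv_negabs_neg (φt + η) (φt + δ) (by linarith)
    rw [hJt.deriv]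
    refine ⟨(sigd_pos _).ne', ?_⟩
    have hL : sigd (φt - (φt + δ)) * (-(sigd (φt + η - (φt + δ)))) < 0 := by
      have := sigd_pos (φt - (φt + δ)); have := sigd_pos (φt + η - (φt + δ))
      nlinarith
    simpa using key _ _ _ _ hJ1 hL
  · -- 0 < η : 0 < δ < η
    obtain ⟨h1, h2⟩ := hδ.1 hpos
    have hJt := hasDeriv_negabs_neg φt (φt + δ) (by linarith)
    have hJ1 := hasDeriv_negabs_pos (φt + η) (φt + δ) (by linarith)
    rw [hJt.deriv]
    refine ⟨(neg_ne_zero.mpr (sigd_pos _).ne'), ?_⟩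
    have hL : (-(sigd (φt - (φt + δ)))) * sigd (φt + η - (φt + δ)) < 0 := by
      have := sigd_pos (φt - (φt + δ)); have := sigd_pos (φt + η - (φt + δ))
      nlinarith
    simpa using key _ _ _ _ hJ1 hL
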